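/- Let f : M → N be a diffeomorphism between oriented n-dimensional Riemannian manifolds with positive Jacobian, 0 ≤ m ≤ n, and let α > 1, β = ∞, s = α/(α-1). Then σ_m(f^{-1})^α · J_{f^{-1}}^{-1} is uniformly bounded on N if and only if σ_{n-m}(f)^s · J_f^{-1} is uniformly bounded on M. -/

import Mathlib

/-- Pointwise duality for the `BD` classes with `β = ∞`: for a diffeomorphism `f` with
positive Jacobian `J` and principal invariants `σ_{n-m}(f)` on `M`, and with
`σ_m(f⁻¹)`, `J_{f⁻¹}` on `N` satisfying `σ_m(f⁻¹, f x) = σ_{n-m}(f,x)/J_f(x)` and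
`J_{f⁻¹}(f x) = J_f(x)⁻¹`, and `α > 1`, `s = α/(α-1)`:
`σ_m(f⁻¹)^α · J_{f⁻¹}⁻¹` is uniformly bounded on `N` iff `σ_{n-m}(f)^s · J_f⁻¹` is
uniformly bounded on `M`. -/
theorem bd_infinity_duality {M N : Type*} (f : M ≃ N)
    (σnm J : M → ℝ) (σm Jinv : N → ℝ)
    (hJ : ∀ x, 0 < J x) (hσ : ∀ x, 0 ≤ σnm x)
    (hσrel : ∀ x, σm (f x) = σnm x / J x)
    (hJrel : ∀ x, Jinv (f x) = (J x)⁻¹)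
    (α s : ℝ) (hα : 1 < α) (hs : s = α / (α - 1)) :
    (∃ C : ℝ, ∀ y, σm y ^ α * (Jinv y)⁻¹ ≤ C) ↔
      (∃ C : ℝ, ∀ x, σnm x ^ s * (J x)⁻¹ ≤ C) := by
  have hα1 : (0:ℝ) < α - 1 := by linarith
  have hsα : s * (α - 1) = α := by
    rw [hs, div_mul_cancel₀]; exact ne_of_gt hα1
  have ht0 : ∀ x, 0 ≤ σnm x ^ s * (J x)⁻¹ := fun x =>
    mul_nonneg (Real.rpow_nonneg (hσ x) s) (inv_nonneg.2 (hJ x).le)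
  have key : ∀ x, σm (f x) ^ α * (Jinv (f x))⁻¹ = (σnm x ^ s * (J x)⁻¹) ^ (α - 1) := by
    intro x
    have hJx := hJ x
    have h2 : J x ^ α = J x ^ (α - 1) * J x := by
      rw [show α = (α - 1) + 1 by ring, Real.rpow_add hJx, Real.rpow_one]; ring_nf
    have h1 : σm (f x) ^ α * (Jinv (f x))⁻¹ = σnm x ^ α * ((J x) ^ (α - 1))⁻¹ := by
      rw [hσrel, hJrel, inv_inv, Real.div_rpow (hσ x) hJx.le, h2]
      have := Real.rpow_pos_of_pos hJx (α - 1)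
      field_simp
    have h3 : (σnm x ^ s * (J x)⁻¹) ^ (α - 1) = σnm x ^ α * ((J x) ^ (α - 1))⁻¹ := by
      rw [Real.mul_rpow (Real.rpow_nonneg (hσ x) s) (inv_nonneg.2 hJx.le),
        ← Real.rpow_mul (hσ x), hsα, Real.inv_rpow hJx.le]
    rw [h1, h3]
  constructor
  · rintro ⟨C, hC⟩
    refine ⟨(max C 0) ^ (α - 1)⁻¹, fun x => ?_⟩
    have h := (key x) ▸ hC (f x)
    have h' : (σnm x ^ s * (J x)⁻¹) ^ (α - 1) ≤ max C 0 := le_trans h (le_max_left _ _)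
    have := Real.rpow_le_rpow (Real.rpow_nonneg (ht0 x) _) h'
      (inv_nonneg.2 hα1.le)
    rwa [Real.rpow_rpow_inv (ht0 x) (ne_of_gt hα1)] at this
  · rintro ⟨C, hC⟩
    refine ⟨(max C 0) ^ (α - 1), fun y => ?_⟩
    have hy : f (f.symm y) = y := f.apply_symm_apply y
    rw [← hy, key]
    exact Real.rpow_le_rpow (ht0 _) (le_trans (hC _) (le_max_left _ _)) hα1.le
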